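/- Let f, g : S¹ → S¹ be continuous maps with deg(f) ≠ deg(g). Then there exists x₀ ∈ S¹ with dist(f(x₀), g(x₀)) = 1/2; in particular sup_{x ∈ S¹} dist(f(x), g(x)) = 1/2, so continuous circle maps of distinct degrees are at C⁰ distance exactly 1/2 from each other. -/

import Mathlib

open MeasureTheory Filter Topology ENNReal Function

noncomputable section

attribute [local instance] ZeroLEOneClass.factZeroLtOne

/-- The circle `ℝ/ℤ`, with its quotient metric (for which all distances are `≤ 1/2`). -/
abbrev Circle1 := AddCircle (1 : ℝ)

lemma dist_coe_half (u v : ℝ) (k : ℤ) (h : u - v = k + 1/2) :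
    dist ((u : Circle1)) ((v : Circle1)) = 1 / 2 := by
  rw [dist_eq_norm, ← QuotientAddGroup.mk_sub, h]
  rw [AddCircle.norm_eq (p := (1:ℝ))]
  have hr : round (((k:ℝ) + 1/2)) = k + 1 := by
    rw [add_comm, round_add_intCast, one_div, round_two_inv]; ring
  rw [inv_one, one_mul, mul_one, hr]
  push_cast
  rw [abs_of_nonpos] <;> linarith

theorem dist_eq_half_of_degree_ne
    (f g : C(Circle1, Circle1)) (F G : ℝ → ℝ) (hF : Continuous F) (hG : Continuous G)
    (hFf : ∀ x : ℝ, f (↑x) = ↑(F x)) (hGg : ∀ x : ℝ, g (↑x) = ↑(G x))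
    (a b : ℤ) (ha : ∀ x : ℝ, F (x + 1) = F x + a) (hb : ∀ x : ℝ, G (x + 1) = G x + b)
    (hab : a ≠ b) :
    (∃ x₀ : Circle1, dist (f x₀) (g x₀) = 1 / 2) ∧
      (⨆ x : Circle1, dist (f x) (g x)) = 1 / 2 := by
  set H : ℝ → ℝ := fun x => F x - G x with hH
  have hHc : Continuous H := hF.sub hG
  set c : ℤ := a - b with hc
  have hc0 : c ≠ 0 := sub_ne_zero.mpr hab
  have hH1 : H 1 = H 0 + c := by
    simp only [hH]
    rw [show (1:ℝ) = 0 + 1 by ring, ha, hb]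
    push_cast [hc]; ring
  obtain ⟨k, x, hx⟩ : ∃ (k : ℤ) (x : ℝ), H x = k + 1/2 := by
    rcases hc0.lt_or_gt with h | h
    · have hcle : (c : ℝ) ≤ -1 := by
        have : c ≤ -1 := by omega
        exact_mod_cast this
      refine ⟨⌈H 0 - 1/2⌉ - 1, ?_⟩
      have hceil1 := Int.ceil_lt_add_one (H 0 - 1/2)
      have hceil2 := Int.le_ceil (H 0 - 1/2)
      have hmem : ((⌈H 0 - 1/2⌉ : ℝ) - 1/2) ∈ Set.uIcc (H 0) (H 1) := by
        rw [hH1, Set.mem_uIcc]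
        right; constructor <;> linarith
      obtain ⟨x, _, hx⟩ := intermediate_value_uIcc (a := 0) (b := 1) hHc.continuousOn hmem
      exact ⟨x, by rw [hx]; push_cast; ring⟩
    · have hcle : (1:ℝ) ≤ (c : ℝ) := by exact_mod_cast h
      refine ⟨⌊H 0 + 1/2⌋, ?_⟩
      have hfl1 := Int.lt_floor_add_one (H 0 + 1/2)
      have hfl2 := Int.floor_le (H 0 + 1/2)
      have hmem : ((⌊H 0 + 1/2⌋ : ℝ) + 1/2) ∈ Set.uIcc (H 0) (H 1) := by
        rw [hH1, Set.mem_uIcc]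
        left; constructor <;> linarith
      obtain ⟨x, _, hx⟩ := intermediate_value_uIcc (a := 0) (b := 1) hHc.continuousOn hmem
      exact ⟨x, hx⟩
  have hdist : dist (f (↑x)) (g (↑x)) = 1 / 2 := by
    rw [hFf, hGg]
    exact dist_coe_half (F x) (G x) k hx
  refine ⟨⟨↑x, hdist⟩, ?_⟩
  have hle : ∀ z : Circle1, dist (f z) (g z) ≤ 1 / 2 := by
    intro z
    have := AddCircle.norm_le_half_period (p := (1:ℝ)) (x := f z - g z) one_ne_zero
    rw [dist_eq_norm]
    simpa using this
  have hbdd : BddAbove (Set.range fun z : Circle1 => dist (f z) (g z)) := by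
    refine ⟨1/2, ?_⟩
    rintro r ⟨z, rfl⟩
    exact hle z
  apply le_antisymm
  · exact ciSup_le hle
  · calc (1:ℝ)/2 = dist (f (↑x)) (g (↑x)) := hdist.symm
      _ ≤ _ := le_ciSup hbdd (↑x : Circle1)

end
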